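/- For every n ≥ 1: (i) every permissible Riviera configuration of length n has at most ⌈2n/3⌉ occupied lots, and (ii) there exists a maximal Riviera configuration of length n with exactly ⌈2n/3⌉ occupied lots. Hence the largest possible number of occupied lots in a maximal Riviera configuration of length n is ⌈2n/3⌉. -/

import Mathlib

/-- A Riviera configuration of length `n`: zero-padded outside `{0, …, n−1}`. -/
def RivieraConfig (n : ℕ) (c : ℤ → Bool) : Prop :=
  ∀ j : ℤ, j < 0 ∨ (n : ℤ) ≤ j → c j = false

/-- Permissibility: no occupied lot has both neighbors occupied. -/
def RivieraPermissible (c : ℤ → Bool) : Prop :=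
  ¬ ∃ i : ℤ, c (i - 1) = true ∧ c i = true ∧ c (i + 1) = true

/-- Maximality: permissible and no house can be added. -/
def RivieraMaximal (n : ℕ) (c : ℤ → Bool) : Prop :=
  RivieraPermissible c ∧
    ∀ j : ℤ, 0 ≤ j → j < (n : ℤ) → c j = false →
      ¬ RivieraPermissible (Function.update c j true)

/-- The number of occupied lots of a configuration of length `n`. -/
noncomputable def rivieraOccupancy (n : ℕ) (c : ℤ → Bool) : ℕ :=
  ((Finset.Ico (0 : ℤ) (n : ℤ)).filter fun j => c j = true).card

lemma riviera_ceil_eq (n : ℕ) : ⌈(2 * n : ℚ) / 3⌉₊ = (2 * n + 2) / 3 := by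
  apply le_antisymm
  · rw [Nat.ceil_le, div_le_iff₀ (by norm_num : (0:ℚ) < 3)]
    have h : 2 * n ≤ ((2 * n + 2) / 3) * 3 := by omega
    exact_mod_cast h
  · by_contra h
    push_neg at h
    have h3 := Nat.le_ceil ((2 * n : ℚ) / 3)
    rw [div_le_iff₀ (by norm_num : (0:ℚ) < 3)] at h3
    have h4 : 2 * n ≤ ⌈(2 * n : ℚ) / 3⌉₊ * 3 := by exact_mod_cast h3
    omega

lemma riviera_count_le (c : ℤ → Bool) (n : ℕ) :
    ((Finset.Ico (0 : ℤ) (n : ℤ)).filter fun j => c j = true).card ≤ n := by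
  refine le_trans (Finset.card_filter_le _ _) ?_
  rw [Int.card_Ico]
  omega

lemma riviera_block_le (c : ℤ → Bool) (hc : RivieraPermissible c) (a : ℤ) :
    ((Finset.Ico a (a + 3)).filter fun j => c j = true).card ≤ 2 := by
  by_contra h
  push_neg at h
  have hcard : (Finset.Ico a (a + 3)).card = 3 := by rw [Int.card_Ico]; omega
  have heq : (Finset.Ico a (a + 3)).filter (fun j => c j = true) = Finset.Ico a (a + 3) :=
    Finset.eq_of_subset_of_card_le (Finset.filter_subset _ _) (by omega)
  have hmem : ∀ x : ℤ, a ≤ x → x < a + 3 → c x = true := by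
    intro x h1 h2
    have : x ∈ (Finset.Ico a (a + 3)).filter (fun j => c j = true) := by
      rw [heq]; simp only [Finset.mem_Ico]; omega
    exact (Finset.mem_filter.mp this).2
  refine hc ⟨a + 1, ?_, ?_, ?_⟩
  · rw [show a + 1 - 1 = a from by ring]; exact hmem a (by omega) (by omega)
  · exact hmem (a + 1) (by omega) (by omega)
  · rw [show a + 1 + 1 = a + 2 from by ring]; exact hmem (a + 2) (by omega) (by omega)

lemma riviera_upper (c : ℤ → Bool) (hc : RivieraPermissible c) :
    ∀ n : ℕ, ((Finset.Ico (0 : ℤ) (n : ℤ)).filter fun j => c j = true).card ≤ (2 * n + 2) / 3 := by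
  intro n
  induction n using Nat.strong_induction_on with
  | _ n ih =>
    match n with
    | 0 => exact le_trans (riviera_count_le c 0) (by omega)
    | 1 => exact le_trans (riviera_count_le c 1) (by omega)
    | 2 => exact le_trans (riviera_count_le c 2) (by omega)
    | (m + 3) =>
      have hsplit : Finset.Ico (0 : ℤ) ((m + 3 : ℕ) : ℤ) =
          Finset.Ico (0 : ℤ) (m : ℤ) ∪ Finset.Ico (m : ℤ) ((m : ℤ) + 3) := by
        ext j
        simp only [Finset.mem_Ico, Finset.mem_union]
        push_cast
        omega
      rw [hsplit, Finset.filter_union]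
      refine le_trans (Finset.card_union_le _ _) ?_
      have h1 := ih m (by omega)
      have h2 := riviera_block_le c hc (m : ℤ)
      omega

lemma riviera_count_pattern (n : ℕ) :
    ((Finset.Ico (0 : ℤ) (n : ℤ)).filter fun j => j % 3 ≠ 2).card = n - n / 3 := by
  induction n with
  | zero => simp
  | succ n ih =>
    have hins : Finset.Ico (0 : ℤ) ((n + 1 : ℕ) : ℤ) = insert (n : ℤ) (Finset.Ico (0 : ℤ) (n : ℤ)) := by
      ext j
      simp only [Finset.mem_Ico, Finset.mem_insert]
      push_cast
      omega
    have hnot : (n : ℤ) ∉ (Finset.Ico (0 : ℤ) (n : ℤ)).filter (fun j => j % 3 ≠ 2) := by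
      simp [Finset.mem_Ico]
    rw [hins, Finset.filter_insert]
    by_cases h : (n : ℤ) % 3 = 2
    · rw [if_neg (by simpa using h)]
      have hn : n % 3 = 2 := by omega
      omega
    · rw [if_pos h, Finset.card_insert_of_notMem hnot]
      have hn : n % 3 ≠ 2 := by omega
      omega

theorem riviera_max_occupancy (n : ℕ) (hn : 1 ≤ n) :
    (∀ c : ℤ → Bool, RivieraConfig n c → RivieraPermissible c →
      rivieraOccupancy n c ≤ ⌈(2 * n : ℚ) / 3⌉₊) ∧
    (∃ c : ℤ → Bool, RivieraConfig n c ∧ RivieraMaximal n c ∧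
      rivieraOccupancy n c = ⌈(2 * n : ℚ) / 3⌉₊) := by
  constructor
  · intro c _ hperm
    rw [riviera_ceil_eq]
    exact riviera_upper c hperm n
  · set c : ℤ → Bool := fun j => decide (0 ≤ j ∧ j < (n : ℤ) ∧ j % 3 ≠ 2) with hcdef
    have hcval : ∀ j : ℤ, c j = true ↔ (0 ≤ j ∧ j < (n : ℤ) ∧ j % 3 ≠ 2) := by
      intro j; simp [hcdef]
    have hconfig : RivieraConfig n c := by
      intro j hj
      rw [← Bool.not_eq_true, hcval]
      omega
    have hperm : RivieraPermissible c := by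
      rintro ⟨i, h1, h2, h3⟩
      rw [hcval] at h1 h2 h3
      omega
    refine ⟨c, hconfig, ⟨hperm, ?_⟩, ?_⟩
    · intro j hj0 hjn hcj hpu
      rw [← Bool.not_eq_true, hcval] at hcj
      have hj2 : j % 3 = 2 := by omega
      by_cases h : j + 1 < (n : ℤ)
      · refine hpu ⟨j, ?_, ?_, ?_⟩
        · rw [Function.update_of_ne (by omega), hcval]; omega
        · rw [Function.update_self]
        · rw [Function.update_of_ne (by omega), hcval]; omega
      · refine hpu ⟨j - 1, ?_, ?_, ?_⟩
        · rw [Function.update_of_ne (by omega), hcval]; omega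
        · rw [Function.update_of_ne (by omega), hcval]; omega
        · rw [show j - 1 + 1 = j from by ring, Function.update_self]
    · unfold rivieraOccupancy
      have heq : (Finset.Ico (0 : ℤ) (n : ℤ)).filter (fun j => c j = true)
          = (Finset.Ico (0 : ℤ) (n : ℤ)).filter (fun j => j % 3 ≠ 2) := by
        ext x
        simp only [Finset.mem_filter, Finset.mem_Ico, hcval]
        omega
      rw [heq, riviera_count_pattern, riviera_ceil_eq]
      omega
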